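/- Let M be a nonzero comultiplication R-module. If the large sum graph Ǵ(M) is connected, then Ǵ(M) has no cut vertex. -/

import Mathlib

/-- `M` is a comultiplication `R`-module: every submodule is of the form `(0 :_M I)`. -/
def IsComultiplication (R M : Type*) [CommRing R] [AddCommGroup M] [Module R M] : Prop :=
  ∀ N : Submodule R M, ∃ I : Ideal R, ∀ m : M, m ∈ N ↔ ∀ r ∈ I, r • m = 0

/-- A submodule is large (essential) if it meets every nonzero submodule nontrivially. -/
def IsLarge {R M : Type*} [CommRing R] [AddCommGroup M] [Module R M]
    (N : Submodule R M) : Prop :=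
  ∀ L : Submodule R M, L ≠ ⊥ → N ⊓ L ≠ ⊥

/-- The vertices of the large sum graph: nonzero non-large submodules. -/
abbrev LargeSumVtx (R M : Type*) [CommRing R] [AddCommGroup M] [Module R M] :=
  {N : Submodule R M // N ≠ ⊥ ∧ ¬ IsLarge N}

/-- The large sum graph: distinct nonzero non-large submodules `N, K` are adjacent
iff `N + K` is not large. -/
def largeSumGraph (R M : Type*) [CommRing R] [AddCommGroup M] [Module R M] :
    SimpleGraph (LargeSumVtx R M) where
  Adj N K := N ≠ K ∧ ¬ IsLarge (N.1 ⊔ K.1)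
  symm := ⟨fun a b ⟨h1, h2⟩ => ⟨h1.symm, by rwa [sup_comm]⟩⟩
  loopless := ⟨fun a h => h.1 rfl⟩

section Aux

variable {R M : Type*} [CommRing R] [AddCommGroup M] [Module R M]

/-- The "torsion by `I`" submodule `(0 :_M I)`. -/
def torSub (I : Ideal R) : Submodule R M where
  carrier := {m | ∀ r ∈ I, r • m = 0}
  add_mem' := fun ha hb => by
    intro r hr
    rw [smul_add, ha r hr, hb r hr, add_zero]
  zero_mem' := fun r _ => smul_zero r
  smul_mem' := fun c x hx => by
    intro r hr
    rw [smul_comm, hx r hr, smul_zero]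

lemma torSub_anti {I J : Ideal R} (hIJ : I ≤ J) : (torSub J : Submodule R M) ≤ torSub I :=
  fun _ hm r hr => hm r (hIJ hr)

lemma comult_eq (hc : IsComultiplication R M) (N : Submodule R M) :
    N = torSub N.annihilator := by
  obtain ⟨I, hI⟩ := hc N
  have hIle : I ≤ N.annihilator := by
    intro r hr
    exact Submodule.mem_annihilator.mpr fun n hn => (hI n).mp hn r hr
  apply le_antisymm
  · intro m hm r hr
    exact Submodule.mem_annihilator.mp hr m hm
  · intro m hm
    exact (hI m).mpr fun r hr => hm r (hIle hr)

/-- A simple submodule, witnessed by a generator annihilated by a maximal ideal. -/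
def Smp (S : Submodule R M) : Prop :=
  ∃ (x : M) (P : Ideal R), P.IsMaximal ∧ x ≠ 0 ∧ (∀ r ∈ P, r • x = 0) ∧
    S = Submodule.span R {x}

lemma Smp.ne_bot {S : Submodule R M} (hS : Smp S) : S ≠ ⊥ := by
  obtain ⟨x, P, _, hx, _, rfl⟩ := hS
  simpa [Submodule.span_singleton_eq_bot] using hx

lemma mem_max_of_smul_eq_zero {P : Ideal R} (hP : P.IsMaximal) {x : M} (hx : x ≠ 0)
    (hkill : ∀ r ∈ P, r • x = 0) {r : R} (hr : r • x = 0) : r ∈ P := by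
  by_contra hrP
  obtain ⟨y, i, hiP, hyi⟩ := hP.exists_inv hrP
  apply hx
  calc x = (y * r + i) • x := by rw [hyi, one_smul]
    _ = y • (r • x) + i • x := by rw [add_smul, mul_smul]
    _ = 0 := by rw [hr, smul_zero, hkill i hiP, add_zero]

lemma Smp.le_or {S : Submodule R M} (hS : Smp S) (N : Submodule R M) :
    S ⊓ N = ⊥ ∨ S ≤ N := by
  by_cases hb : S ⊓ N = ⊥
  · exact Or.inl hb
  right
  obtain ⟨x, P, hP, hx, hkill, rfl⟩ := hS
  obtain ⟨y, hy, hy0⟩ := (Submodule.ne_bot_iff _).mp hb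
  obtain ⟨r, hrx⟩ := Submodule.mem_span_singleton.mp hy.1
  have hrP : r ∉ P := by
    intro hrP
    exact hy0 (hrx ▸ hkill r hrP)
  obtain ⟨s, i, hiP, hsi⟩ := hP.exists_inv hrP
  have hxN : x ∈ N := by
    have hxy : x = s • y := by
      calc x = (s * r + i) • x := by rw [hsi, one_smul]
        _ = s • (r • x) + i • x := by rw [add_smul, mul_smul]
        _ = s • y := by rw [hrx, hkill i hiP, add_zero]
    rw [hxy]
    exact N.smul_mem s hy.2
  exact Submodule.span_le.mpr (by simpa using hxN)

lemma smp_disjoint {S T : Submodule R M} (hS : Smp S) (hT : Smp T) (hne : S ≠ T) :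
    S ⊓ T = ⊥ := by
  rcases hS.le_or T with h | h
  · exact h
  rcases hT.le_or S with h' | h'
  · rw [inf_comm] at h'; exact h'
  · exact absurd (le_antisymm h h') hne

/-- Every nonzero submodule of a comultiplication module contains a simple submodule. -/
lemma exists_smp (hc : IsComultiplication R M) {N : Submodule R M} (hN : N ≠ ⊥) :
    ∃ S : Submodule R M, Smp S ∧ S ≤ N := by
  obtain ⟨m, hmN, hm0⟩ := (Submodule.ne_bot_iff _).mp hN
  set A : Submodule R M := Submodule.span R {m} with hA
  have hAnn_ne_top : A.annihilator ≠ ⊤ := by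
    intro htop
    have h1 : (1 : R) ∈ A.annihilator := htop ▸ Submodule.mem_top
    have h2 := (Submodule.mem_annihilator_span_singleton m 1).mp h1
    rw [one_smul] at h2
    exact hm0 h2
  obtain ⟨P, hP, hle⟩ := Ideal.exists_le_maximal _ hAnn_ne_top
  set B : Submodule R M := P • A with hB
  have hBA : B ≤ A := Submodule.smul_le_right
  have hmB : m ∉ B := by
    intro hmem
    obtain ⟨t, htP, htm⟩ := Submodule.mem_smul_span_singleton.mp hmem
    have h1t : (1 - t) ∈ A.annihilator := by
      rw [Submodule.mem_annihilator_span_singleton, sub_smul, one_smul, htm, sub_self]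
    have hone : (1 : R) ∈ P := by
      have := P.add_mem (hle h1t) htP
      simpa using this
    exact hP.ne_top ((Ideal.eq_top_iff_one P).mpr hone)
  have hBneA : B ≠ A := fun hEq => hmB (hEq ▸ Submodule.mem_span_singleton_self m)
  have hannAB : A.annihilator ≤ B.annihilator := by
    intro r hr
    exact Submodule.mem_annihilator.mpr fun n hn =>
      Submodule.mem_annihilator.mp hr n (hBA hn)
  have hann_ne : ¬ B.annihilator ≤ A.annihilator := by
    intro hle'
    apply hBneA
    rw [comult_eq hc B, comult_eq hc A]
    exact le_antisymm (torSub_anti hannAB) (torSub_anti hle')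
  obtain ⟨r, hrB, hrA⟩ := Set.not_subset.mp hann_ne
  have hrm : r • m ≠ 0 := by
    intro h0
    exact hrA ((Submodule.mem_annihilator_span_singleton m r).mpr h0)
  refine ⟨Submodule.span R {r • m}, ⟨r • m, P, hP, hrm, ?_, rfl⟩, ?_⟩
  · intro t htP
    have htm : t • m ∈ B := Submodule.smul_mem_smul htP (Submodule.mem_span_singleton_self m)
    have hz := Submodule.mem_annihilator.mp hrB _ htm
    calc t • r • m = r • t • m := smul_comm t r m
      _ = 0 := hz
  · exact Submodule.span_le.mpr (by simpa using N.smul_mem r hmN)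

/-- Key lemma: a simple submodule disjoint from `N` and `K` is disjoint from `N ⊔ K`,
in a comultiplication module. -/
lemma smp_inf_sup_eq_bot (hc : IsComultiplication R M) {S N K : Submodule R M}
    (hS : Smp S) (hN : S ⊓ N = ⊥) (hK : S ⊓ K = ⊥) : S ⊓ (N ⊔ K) = ⊥ := by
  rcases hS.le_or (N ⊔ K) with h | hle
  · exact h
  exfalso
  obtain ⟨x, P, hP, hx, hkill, rfl⟩ := hS
  have hxNK : x ∈ N ⊔ K := hle (Submodule.mem_span_singleton_self x)
  obtain ⟨n, hn, k, hk, hnk⟩ := Submodule.mem_sup.mp hxNK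
  have hNann : ∃ i ∈ N.annihilator, i ∉ P := by
    by_contra hcon
    push_neg at hcon
    have hxN : x ∈ N := by
      rw [comult_eq hc N]
      exact fun r hr => hkill r (hcon r hr)
    have hmem : x ∈ Submodule.span R {x} ⊓ N :=
      ⟨Submodule.mem_span_singleton_self x, hxN⟩
    rw [hN] at hmem
    exact hx hmem
  have hKann : ∃ j ∈ K.annihilator, j ∉ P := by
    by_contra hcon
    push_neg at hcon
    have hxK : x ∈ K := by
      rw [comult_eq hc K]
      exact fun r hr => hkill r (hcon r hr)
    have hmem : x ∈ Submodule.span R {x} ⊓ K :=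
      ⟨Submodule.mem_span_singleton_self x, hxK⟩
    rw [hK] at hmem
    exact hx hmem
  obtain ⟨i, hiN, hiP⟩ := hNann
  obtain ⟨j, hjK, hjP⟩ := hKann
  have hin : i • n = 0 := Submodule.mem_annihilator.mp hiN n hn
  have hjk : j • k = 0 := Submodule.mem_annihilator.mp hjK k hk
  have e1 : (i * j) • n = j • (i • n) := by rw [mul_comm, mul_smul]
  have e2 : (i * j) • k = i • (j • k) := by rw [mul_smul]
  have hij : (i * j) • x = 0 := by
    calc (i * j) • x = (i * j) • n + (i * j) • k := by rw [← smul_add, hnk]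
      _ = 0 := by rw [e1, e2, hin, hjk, smul_zero, smul_zero, add_zero]
  have hijP : i * j ∈ P := mem_max_of_smul_eq_zero hP hx hkill hij
  rcases hP.isPrime.mem_or_mem hijP with hmem | hmem
  · exact hiP hmem
  · exact hjP hmem

/-- A non-large submodule misses some simple submodule. -/
lemma exists_smp_disjoint (hc : IsComultiplication R M) {N : Submodule R M}
    (hN : ¬ IsLarge N) : ∃ S : Submodule R M, Smp S ∧ S ⊓ N = ⊥ := by
  rw [IsLarge] at hN
  push_neg at hN
  obtain ⟨L, hL, hNL⟩ := hN
  obtain ⟨S, hS, hSL⟩ := exists_smp hc hL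
  refine ⟨S, hS, ?_⟩
  rw [eq_bot_iff, ← hNL, inf_comm]
  exact inf_le_inf_left N hSL

lemma not_large_of_smp_disjoint {S N : Submodule R M} (hS : Smp S) (hd : S ⊓ N = ⊥) :
    ¬ IsLarge N := fun hL => hL S hS.ne_bot (by rwa [inf_comm] at hd)

end Aux

set_option maxHeartbeats 1000000 in
/-- If the large sum graph of a nonzero comultiplication module is connected, then it has no
cut vertex: removing any vertex leaves a (pre)connected graph. -/
theorem stmt10 {R M : Type*} [CommRing R] [AddCommGroup M] [Module R M]
    [Nontrivial M] (hc : IsComultiplication R M)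
    (h : (largeSumGraph R M).Connected) :
    ∀ a : LargeSumVtx R M,
      ((largeSumGraph R M).induce {b : LargeSumVtx R M | b ≠ a}).Preconnected := by
  classical
  intro a u v
  -- helper: a common missed simple gives reachability in the induced graph
  have step : ∀ u v : {b : LargeSumVtx R M // b ∈ {b : LargeSumVtx R M | b ≠ a}},
      (∃ S : Submodule R M, Smp S ∧ S ⊓ u.1.1 = ⊥ ∧ S ⊓ v.1.1 = ⊥) →
      ((largeSumGraph R M).induce {b : LargeSumVtx R M | b ≠ a}).Reachable u v := by
    rintro u v ⟨S, hS, h1, h2⟩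
    by_cases he : u = v
    · exact he ▸ SimpleGraph.Reachable.refl u
    · apply SimpleGraph.Adj.reachable
      show (largeSumGraph R M).Adj u.1 v.1
      refine ⟨fun hh => he (Subtype.ext hh), ?_⟩
      exact not_large_of_smp_disjoint hS (smp_inf_sup_eq_bot hc hS h1 h2)
  by_cases h3 : ∃ S T U : Submodule R M,
      Smp S ∧ Smp T ∧ Smp U ∧ S ≠ T ∧ S ≠ U ∧ T ≠ U
  · -- at least three simples: direct construction, no connectivity needed
    obtain ⟨S, T, U, hS, hT, hU, hST, hSU, hTU⟩ := h3
    have pick : ∀ x y : Submodule R M, ∃ W, Smp W ∧ W ≠ x ∧ W ≠ y := by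
      intro x y
      by_cases h1 : S ≠ x ∧ S ≠ y
      · exact ⟨S, hS, h1.1, h1.2⟩
      by_cases h2 : T ≠ x ∧ T ≠ y
      · exact ⟨T, hT, h2.1, h2.2⟩
      by_cases h4 : U ≠ x ∧ U ≠ y
      · exact ⟨U, hU, h4.1, h4.2⟩
      exfalso
      rw [not_and_or, not_ne_iff, not_ne_iff] at h1 h2 h4
      rcases h1 with rfl | rfl <;> rcases h2 with rfl | rfl <;>
        rcases h4 with rfl | rfl <;> simp_all
    obtain ⟨Sb, hSb, hSbu⟩ := exists_smp_disjoint hc u.1.2.2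
    obtain ⟨Sc, hSc, hScv⟩ := exists_smp_disjoint hc v.1.2.2
    obtain ⟨W1, hW1, hW1Sb, hW1a⟩ := pick Sb a.1
    obtain ⟨W2, hW2, hW2Sc, hW2a⟩ := pick Sc a.1
    obtain ⟨W3, hW3, hW3W1, hW3W2⟩ := pick W1 W2
    have d1 : Sb ⊓ W1 = ⊥ := smp_disjoint hSb hW1 (Ne.symm hW1Sb)
    have d2 : Sc ⊓ W2 = ⊥ := smp_disjoint hSc hW2 (Ne.symm hW2Sc)
    have d31 : W3 ⊓ W1 = ⊥ := smp_disjoint hW3 hW1 hW3W1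
    have d32 : W3 ⊓ W2 = ⊥ := smp_disjoint hW3 hW2 hW3W2
    let w1 : {b : LargeSumVtx R M // b ∈ {b : LargeSumVtx R M | b ≠ a}} :=
      ⟨⟨W1, hW1.ne_bot, not_large_of_smp_disjoint hSb d1⟩,
        fun hEq => hW1a (congrArg Subtype.val hEq)⟩
    let w2 : {b : LargeSumVtx R M // b ∈ {b : LargeSumVtx R M | b ≠ a}} :=
      ⟨⟨W2, hW2.ne_bot, not_large_of_smp_disjoint hSc d2⟩,
        fun hEq => hW2a (congrArg Subtype.val hEq)⟩
    have r1 := step u w1 ⟨Sb, hSb, hSbu, d1⟩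
    have r2 := step w1 w2 ⟨W3, hW3, d31, d32⟩
    have r3 := step w2 v ⟨Sc, hSc, by rw [inf_comm]; rw [inf_comm] at d2; exact d2, hScv⟩
    exact (r1.trans r2).trans r3
  · -- at most two simples: connectivity forces all vertices to miss a common simple
    have main : ∀ x y : LargeSumVtx R M, (largeSumGraph R M).Walk x y →
        ∃ S : Submodule R M, Smp S ∧ S ⊓ x.1 = ⊥ ∧ S ⊓ y.1 = ⊥ := by
      intro x y w
      induction w with
      | nil =>
        rename_i z
        obtain ⟨S, hS, hd⟩ := exists_smp_disjoint hc z.2.2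
        exact ⟨S, hS, hd, hd⟩
      | @cons x' y' z' hadj w ih =>
        obtain ⟨V, hV, hVy, hVz⟩ := ih
        obtain ⟨W, hW, hWxy⟩ := exists_smp_disjoint hc hadj.2
        have hWx : W ⊓ x'.1 = ⊥ :=
          eq_bot_iff.mpr (le_trans (inf_le_inf_left W le_sup_left) (le_of_eq hWxy))
        have hWy : W ⊓ y'.1 = ⊥ :=
          eq_bot_iff.mpr (le_trans (inf_le_inf_left W le_sup_right) (le_of_eq hWxy))
        by_cases hWV : W = V
        · exact ⟨W, hW, hWx, by rw [hWV]; exact hVz⟩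
        exfalso
        obtain ⟨Y, hY, hYle⟩ := exists_smp hc y'.2.1
        have hYW : Y ≠ W := by
          intro hEq
          have hle' : W ≤ y'.1 := by rw [← hEq]; exact hYle
          have : W ⊓ y'.1 = W := inf_eq_left.mpr hle'
          rw [hWy] at this
          exact hW.ne_bot this.symm
        have hYV : Y ≠ V := by
          intro hEq
          have hle' : V ≤ y'.1 := by rw [← hEq]; exact hYle
          have : V ⊓ y'.1 = V := inf_eq_left.mpr hle'
          rw [hVy] at this
          exact hV.ne_bot this.symm
        exact h3 ⟨W, V, Y, hW, hV, hY, hWV, hYW.symm, hYV.symm⟩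
    obtain ⟨w⟩ := h.preconnected u.1 v.1
    exact step u v (main u.1 v.1 w)
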